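/- Let φ ∈ ℓ∞ and α ∈ ℝ. If φ is C_∞ summable to α — i.e., both limsup_{n→∞} (C^kφ)(n) → α and liminf_{n→∞} (C^kφ)(n) → α as k → ∞ — then φ is summable to α by the logarithmic method: (1/log n) Σ_{i=1}^n φ(i)/i → α as n → ∞. -/

import Mathlib

open Filter

/-- The Cesàro operator `(Cφ)(n) = (1/n) ∑_{i=1}^n φ(i)` on sequences. -/
noncomputable def cesaro (φ : ℕ → ℝ) (n : ℕ) : ℝ :=
  (1 / (n : ℝ)) * ∑ i ∈ Finset.Icc 1 n, φ i

open Finset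

lemma swap_sum (φ : ℕ → ℝ) (n : ℕ) :
    ∑ i ∈ Icc 1 n, cesaro φ i / i
      = ∑ j ∈ Icc 1 n, φ j * (∑ i ∈ Icc j n, 1/((i:ℝ))^2) := by
  have : ∀ i ∈ Icc 1 n, cesaro φ i / i = ∑ j ∈ Icc 1 i, φ j * (1/((i:ℝ))^2) := by
    intro i hi
    rw [cesaro, Finset.mul_sum, Finset.sum_div]
    congr 1 with j
    ring
  rw [Finset.sum_congr rfl this]
  rw [Finset.sum_comm' (t' := Icc 1 n) (s' := fun j => Icc j n)]
  · simp [Finset.mul_sum]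
  · intro x y
    simp only [Finset.mem_Icc]
    omega

lemma tele1 (j : ℕ) (hj : 1 ≤ j) : ∀ n, j ≤ n →
    ∑ i ∈ Icc j n, ((1:ℝ)/i - 1/(i+1)) = 1/j - 1/(n+1) := by
  intro n
  induction n with
  | zero => omega
  | succ n ih =>
    intro hjn
    rcases Nat.lt_or_ge n j with h | h
    · have hj' : j = n + 1 := by omega
      subst hj'
      simp [Finset.Icc_self]
    · rw [Finset.sum_Icc_succ_top (by omega), ih h]
      push_cast
      ring

lemma tele3 (j : ℕ) (hj : 1 ≤ j) : ∀ n, j ≤ n →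
    ∑ i ∈ Icc (j+1) n, (1/((i:ℝ)-1) - 1/i) = 1/j - 1/n := by
  intro n
  induction n with
  | zero => omega
  | succ n ih =>
    intro hjn
    rcases Nat.lt_or_ge n j with h | h
    · have hj' : j = n + 1 := by omega
      subst hj'
      rw [Finset.Icc_eq_empty (by omega)]
      simp
    · rw [Finset.sum_Icc_succ_top (by omega), ih h]
      have hn : (1:ℝ) ≤ n := by exact_mod_cast h.trans' hj
      push_cast
      rw [add_sub_cancel_right]
      ring

lemma S_bounds (j n : ℕ) (hj : 1 ≤ j) (hjn : j ≤ n) :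
    |(∑ i ∈ Icc j n, 1/((i:ℝ))^2) - 1/(j:ℝ)| ≤ 1/((j:ℝ))^2 + 1/(n:ℝ) := by
  have hjR : (1:ℝ) ≤ (j:ℝ) := by exact_mod_cast hj
  have hnR : (1:ℝ) ≤ (n:ℝ) := by exact_mod_cast hj.trans hjn
  have low : 1/(j:ℝ) - 1/(n+1) ≤ ∑ i ∈ Icc j n, 1/((i:ℝ))^2 := by
    rw [← tele1 j hj n hjn]
    apply Finset.sum_le_sum
    intro i hi
    have hi1 : (1:ℝ) ≤ (i:ℝ) := by
      exact_mod_cast hj.trans (Finset.mem_Icc.mp hi).1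
    have h1 : 1/(i:ℝ) - 1/((i:ℝ)+1) = 1/((i:ℝ)*((i:ℝ)+1)) := by
      rw [div_sub_div _ _ (by linarith) (by linarith)]
      ring_nf
    rw [h1]
    apply one_div_le_one_div_of_le (by positivity) (by nlinarith)
  have split : ∑ i ∈ Icc j n, 1/((i:ℝ))^2
      = 1/((j:ℝ))^2 + ∑ i ∈ Icc (j+1) n, 1/((i:ℝ))^2 := by
    rw [Finset.Icc_add_one_left_eq_Ioc, Finset.Icc_eq_cons_Ioc hjn, Finset.sum_cons]
  have up2 : ∑ i ∈ Icc (j+1) n, 1/((i:ℝ))^2 ≤ 1/(j:ℝ) - 1/n := by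
    rw [← tele3 j hj n hjn]
    apply Finset.sum_le_sum
    intro i hi
    have hi2 : (2:ℝ) ≤ (i:ℝ) := by
      have := (Finset.mem_Icc.mp hi).1
      exact_mod_cast (by omega : 2 ≤ i)
    have h1 : 1/((i:ℝ)-1) - 1/(i:ℝ) = 1/(((i:ℝ)-1)*(i:ℝ)) := by
      rw [div_sub_div _ _ (by linarith) (by linarith)]
      ring_nf
    rw [h1]
    apply one_div_le_one_div_of_le (by nlinarith) (by nlinarith)
  have h1n : 1/((n:ℝ)+1) ≤ 1/(n:ℝ) := by
    apply one_div_le_one_div_of_le (by linarith) (by linarith)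
  have hj2 : (0:ℝ) ≤ 1/(j:ℝ)^2 := by positivity
  have hn0 : (0:ℝ) ≤ 1/(n:ℝ) := by positivity
  rw [abs_le]
  constructor <;> [linarith; linarith]


lemma basel_bound (n : ℕ) (hn : 1 ≤ n) : ∑ j ∈ Icc 1 n, 1/((j:ℝ))^2 ≤ 2 := by
  have h : ∑ j ∈ Icc 1 n, 1/((j:ℝ))^2 ≤ ∑ j ∈ Icc 1 n, 2*((1:ℝ)/j - 1/(j+1)) := by
    apply Finset.sum_le_sum
    intro i hi
    have hi1 : (1:ℝ) ≤ (i:ℝ) := by exact_mod_cast (Finset.mem_Icc.mp hi).1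
    have h1 : (1:ℝ)/(i:ℝ) - 1/((i:ℝ)+1) = 1/((i:ℝ)*((i:ℝ)+1)) := by
      rw [div_sub_div _ _ (by linarith) (by linarith)]
      ring_nf
    rw [h1]
    rw [mul_one_div, div_le_div_iff₀ (by positivity) (by positivity)]
    nlinarith
  rw [← Finset.mul_sum, tele1 1 le_rfl n hn] at h
  have : (0:ℝ) ≤ 1/((n:ℝ)+1) := by positivity
  calc ∑ j ∈ Icc 1 n, 1/((j:ℝ))^2 ≤ 2*(1/(1:ℕ) - 1/((n:ℝ)+1)) := h
    _ ≤ 2 := by push_cast; linarith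

lemma step (φ : ℕ → ℝ) (M : ℝ) (hM : ∀ n, |φ n| ≤ M) (n : ℕ) (hn : 1 ≤ n) :
    |∑ i ∈ Icc 1 n, φ i / i - ∑ i ∈ Icc 1 n, cesaro φ i / i| ≤ 3*M := by
  have hM0 : 0 ≤ M := (abs_nonneg _).trans (hM 0)
  rw [swap_sum]
  have heq : ∑ i ∈ Icc 1 n, φ i / i - ∑ j ∈ Icc 1 n, φ j * (∑ i ∈ Icc j n, 1/((i:ℝ))^2)
      = ∑ j ∈ Icc 1 n, φ j * (1/(j:ℝ) - ∑ i ∈ Icc j n, 1/((i:ℝ))^2) := by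
    rw [← Finset.sum_sub_distrib]
    congr 1 with j
    ring
  rw [heq]
  calc |∑ j ∈ Icc 1 n, φ j * (1/(j:ℝ) - ∑ i ∈ Icc j n, 1/((i:ℝ))^2)|
      ≤ ∑ j ∈ Icc 1 n, |φ j * (1/(j:ℝ) - ∑ i ∈ Icc j n, 1/((i:ℝ))^2)| :=
        Finset.abs_sum_le_sum_abs _ _
    _ ≤ ∑ j ∈ Icc 1 n, M * (1/((j:ℝ))^2 + 1/(n:ℝ)) := by
        apply Finset.sum_le_sum
        intro j hj
        rw [abs_mul]
        apply mul_le_mul (hM j) ?_ (abs_nonneg _) hM0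
        rw [abs_sub_comm]
        exact S_bounds j n (Finset.mem_Icc.mp hj).1 (Finset.mem_Icc.mp hj).2
    _ = M * (∑ j ∈ Icc 1 n, 1/((j:ℝ))^2) + M * (n * (1/(n:ℝ))) := by
        rw [← Finset.mul_sum, Finset.sum_add_distrib, Finset.sum_const, Nat.card_Icc]
        simp only [nsmul_eq_mul]
        push_cast [Nat.add_sub_cancel]
        ring
    _ ≤ M * 2 + M * 1 := by
        have h1 : (n:ℝ) * (1/(n:ℝ)) ≤ 1 := by
          rcases Nat.eq_zero_or_pos n with h | h
          · simp [h]
          · rw [mul_one_div, div_self (by positivity : (n:ℝ) ≠ 0)]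
        have := basel_bound n hn
        have h2 : 0 ≤ (n:ℝ) * (1/(n:ℝ)) := by positivity
        nlinarith
    _ = 3*M := by ring

lemma Hlog : Filter.Tendsto (fun n : ℕ => (∑ i ∈ Icc 1 n, 1/(i:ℝ)) / Real.log n)
    atTop (nhds 1) := by
  have hH : ∀ n : ℕ, (∑ i ∈ Icc 1 n, 1/(i:ℝ)) = ((harmonic n : ℚ) : ℝ) := by
    intro n
    rw [harmonic_eq_sum_Icc]
    push_cast
    simp [one_div]
  apply tendsto_of_tendsto_of_tendsto_of_le_of_le' (g := fun _ : ℕ => (1:ℝ))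
      (h := fun n : ℕ => 1 + 1/Real.log n)
  · exact tendsto_const_nhds
  · have h := (Real.tendsto_log_atTop.comp tendsto_natCast_atTop_atTop).inv_tendsto_atTop
    have h2 := (tendsto_const_nhds (x := (1:ℝ)) (f := atTop (α := ℕ))).add h
    simpa [one_div] using h2
  · filter_upwards [eventually_ge_atTop 2] with n hn
    have hlog : 0 < Real.log n := Real.log_pos (by exact_mod_cast hn)
    rw [le_div_iff₀ hlog, one_mul, hH]
    calc Real.log n ≤ Real.log (n+1) := by
          apply Real.log_le_log (by positivity)
          push_cast; linarith
      _ ≤ ((harmonic n : ℚ) : ℝ) := by exact_mod_cast log_add_one_le_harmonic n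
  · filter_upwards [eventually_ge_atTop 2] with n hn
    have hlog : 0 < Real.log n := Real.log_pos (by exact_mod_cast hn)
    rw [div_le_iff₀ hlog, hH]
    calc ((harmonic n : ℚ) : ℝ) ≤ 1 + Real.log n := harmonic_le_one_add_log n
      _ ≤ (1 + 1/Real.log n) * Real.log n := by
          rw [add_mul, one_div, inv_mul_cancel₀ hlog.ne']
          linarith

noncomputable def Lm (ψ : ℕ → ℝ) (n : ℕ) : ℝ :=
  (1 / Real.log (n : ℝ)) * ∑ i ∈ Finset.Icc 1 n, ψ i / (i : ℝ)

lemma reg_above (ψ : ℕ → ℝ) (c : ℝ) (hc : ∀ᶠ n in atTop, ψ n ≤ c)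
    (u : ℕ → ℝ) (hu : Tendsto (fun n => u n - Lm ψ n) atTop (nhds 0))
    (hub : IsCoboundedUnder (· ≤ ·) atTop u) : limsup u atTop ≤ c := by
  obtain ⟨N, hN⟩ := eventually_atTop.mp hc
  set B : ℝ := ∑ i ∈ Icc 1 N, |ψ i - c| with hB
  set R : ℕ → ℝ := fun n => B * (1/Real.log n)
      + c * ((∑ i ∈ Icc 1 n, 1/(i:ℝ)) / Real.log n) + (u n - Lm ψ n) with hR
  have hRlim : Tendsto R atTop (nhds c) := by
    have h1 : Tendsto (fun n : ℕ => B * (1/Real.log n)) atTop (nhds 0) := by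
      have h := (Real.tendsto_log_atTop.comp tendsto_natCast_atTop_atTop).inv_tendsto_atTop
      have h2 := h.const_mul B
      simpa [one_div] using h2
    have h2 := (Hlog.const_mul c)
    have h3 := (h1.add h2).add hu
    rw [hR]
    simpa using h3
  have hle : ∀ᶠ n in atTop, u n ≤ R n := by
    filter_upwards [eventually_ge_atTop (max N 2)] with n hn
    have hnN : N ≤ n := le_trans (le_max_left _ _) hn
    have hn2 : 2 ≤ n := le_trans (le_max_right _ _) hn
    have hlog : 0 < Real.log n := Real.log_pos (by exact_mod_cast hn2)
    have key : ∑ i ∈ Icc 1 n, ψ i / i ≤ B + c * ∑ i ∈ Icc 1 n, 1/(i:ℝ) := by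
      have e1 : ∑ i ∈ Icc 1 n, ψ i / i
          = (∑ i ∈ Icc 1 n, (ψ i - c) / i) + c * ∑ i ∈ Icc 1 n, 1/(i:ℝ) := by
        rw [Finset.mul_sum, ← Finset.sum_add_distrib]
        congr 1 with i
        by_cases hi : (i:ℝ) = 0
        · simp [hi]
        · field_simp; ring
      rw [e1]
      have e2 : ∑ i ∈ Icc 1 n, (ψ i - c) / i ≤ B := by
        have e : ∀ m : ℕ, Icc 1 m = Ioc 0 m := fun m => Finset.Icc_add_one_left_eq_Ioc 0 m
        have hsplit : ∑ i ∈ Icc 1 n, (ψ i - c) / (i:ℝ)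
            = (∑ i ∈ Icc 1 N, (ψ i - c) / (i:ℝ)) + ∑ i ∈ Ioc N n, (ψ i - c) / (i:ℝ) := by
          rw [e n, e N, ← Finset.sum_Ioc_consecutive _ (Nat.zero_le N) hnN]
        rw [hsplit]
        have hb1 : ∑ i ∈ Icc 1 N, (ψ i - c) / (i:ℝ) ≤ B := by
          apply Finset.sum_le_sum
          intro i hi
          have hi1 : (1:ℝ) ≤ (i:ℝ) := by exact_mod_cast (Finset.mem_Icc.mp hi).1
          calc (ψ i - c) / (i:ℝ) ≤ |(ψ i - c) / (i:ℝ)| := le_abs_self _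
            _ = |ψ i - c| / (i:ℝ) := by rw [abs_div, Nat.abs_cast]
            _ ≤ |ψ i - c| := by
                rw [div_le_iff₀ (by linarith)]
                nlinarith [abs_nonneg (ψ i - c)]
        have hb2 : ∑ i ∈ Ioc N n, (ψ i - c) / (i:ℝ) ≤ 0 := by
          apply Finset.sum_nonpos
          intro i hi
          have hiN : N ≤ i := (Finset.mem_Ioc.mp hi).1.le
          have : ψ i ≤ c := hN i hiN
          apply div_nonpos_of_nonpos_of_nonneg (by linarith) (by positivity)
        linarith
      linarith
    have : Lm ψ n ≤ B * (1/Real.log n) + c * ((∑ i ∈ Icc 1 n, 1/(i:ℝ)) / Real.log n) := by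
      rw [Lm]
      calc (1/Real.log n) * ∑ i ∈ Icc 1 n, ψ i / i
          ≤ (1/Real.log n) * (B + c * ∑ i ∈ Icc 1 n, 1/(i:ℝ)) := by
            apply mul_le_mul_of_nonneg_left key (by positivity)
        _ = B * (1/Real.log n) + c * ((∑ i ∈ Icc 1 n, 1/(i:ℝ)) / Real.log n) := by
            field_simp
    have : u n ≤ B * (1/Real.log n) + c * ((∑ i ∈ Icc 1 n, 1/(i:ℝ)) / Real.log n)
        + (u n - Lm ψ n) := by linarith
    exact this
  calc limsup u atTop ≤ limsup R atTop :=
        limsup_le_limsup hle hub hRlim.isBoundedUnder_le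
    _ = c := hRlim.limsup_eq

lemma reg_below (ψ : ℕ → ℝ) (c : ℝ) (hc : ∀ᶠ n in atTop, c ≤ ψ n)
    (u : ℕ → ℝ) (hu : Tendsto (fun n => u n - Lm ψ n) atTop (nhds 0))
    (hub : IsCoboundedUnder (· ≥ ·) atTop u) : c ≤ liminf u atTop := by
  obtain ⟨N, hN⟩ := eventually_atTop.mp hc
  set B : ℝ := ∑ i ∈ Icc 1 N, |ψ i - c| with hB
  set R : ℕ → ℝ := fun n => -(B * (1/Real.log n))
      + c * ((∑ i ∈ Icc 1 n, 1/(i:ℝ)) / Real.log n) + (u n - Lm ψ n) with hR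
  have hRlim : Tendsto R atTop (nhds c) := by
    have h1 : Tendsto (fun n : ℕ => B * (1/Real.log n)) atTop (nhds 0) := by
      have h := (Real.tendsto_log_atTop.comp tendsto_natCast_atTop_atTop).inv_tendsto_atTop
      have h2 := h.const_mul B
      simpa [one_div] using h2
    have h2 := (Hlog.const_mul c)
    have h3 := (h1.neg.add h2).add hu
    rw [hR]
    simpa using h3
  have hle : ∀ᶠ n in atTop, R n ≤ u n := by
    filter_upwards [eventually_ge_atTop (max N 2)] with n hn
    have hnN : N ≤ n := le_trans (le_max_left _ _) hn
    have hn2 : 2 ≤ n := le_trans (le_max_right _ _) hn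
    have hlog : 0 < Real.log n := Real.log_pos (by exact_mod_cast hn2)
    have key : -B + c * ∑ i ∈ Icc 1 n, 1/(i:ℝ) ≤ ∑ i ∈ Icc 1 n, ψ i / i := by
      have e1 : ∑ i ∈ Icc 1 n, ψ i / i
          = (∑ i ∈ Icc 1 n, (ψ i - c) / i) + c * ∑ i ∈ Icc 1 n, 1/(i:ℝ) := by
        rw [Finset.mul_sum, ← Finset.sum_add_distrib]
        congr 1 with i
        by_cases hi : (i:ℝ) = 0
        · simp [hi]
        · field_simp; ring
      rw [e1]
      have e2 : -B ≤ ∑ i ∈ Icc 1 n, (ψ i - c) / i := by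
        have e : ∀ m : ℕ, Icc 1 m = Ioc 0 m := fun m => Finset.Icc_add_one_left_eq_Ioc 0 m
        have hsplit : ∑ i ∈ Icc 1 n, (ψ i - c) / (i:ℝ)
            = (∑ i ∈ Icc 1 N, (ψ i - c) / (i:ℝ)) + ∑ i ∈ Ioc N n, (ψ i - c) / (i:ℝ) := by
          rw [e n, e N, ← Finset.sum_Ioc_consecutive _ (Nat.zero_le N) hnN]
        rw [hsplit]
        have hb1 : -B ≤ ∑ i ∈ Icc 1 N, (ψ i - c) / (i:ℝ) := by
          rw [hB, ← Finset.sum_neg_distrib]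
          apply Finset.sum_le_sum
          intro i hi
          have hi1 : (1:ℝ) ≤ (i:ℝ) := by exact_mod_cast (Finset.mem_Icc.mp hi).1
          calc -|ψ i - c| ≤ -(|ψ i - c| / (i:ℝ)) := by
                rw [neg_le_neg_iff, div_le_iff₀ (by linarith)]
                nlinarith [abs_nonneg (ψ i - c)]
            _ = -(|(ψ i - c) / (i:ℝ)|) := by rw [abs_div, Nat.abs_cast]
            _ ≤ (ψ i - c) / (i:ℝ) := neg_abs_le _
        have hb2 : 0 ≤ ∑ i ∈ Ioc N n, (ψ i - c) / (i:ℝ) := by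
          apply Finset.sum_nonneg
          intro i hi
          have hiN : N ≤ i := (Finset.mem_Ioc.mp hi).1.le
          have : c ≤ ψ i := hN i hiN
          apply div_nonneg (by linarith) (by positivity)
        linarith
      linarith
    have hL : -(B * (1/Real.log n)) + c * ((∑ i ∈ Icc 1 n, 1/(i:ℝ)) / Real.log n)
        ≤ Lm ψ n := by
      rw [Lm]
      calc -(B * (1/Real.log n)) + c * ((∑ i ∈ Icc 1 n, 1/(i:ℝ)) / Real.log n)
          = (1/Real.log n) * (-B + c * ∑ i ∈ Icc 1 n, 1/(i:ℝ)) := by field_simp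
        _ ≤ (1/Real.log n) * ∑ i ∈ Icc 1 n, ψ i / i := by
            apply mul_le_mul_of_nonneg_left key (by positivity)
    have : -(B * (1/Real.log n)) + c * ((∑ i ∈ Icc 1 n, 1/(i:ℝ)) / Real.log n)
        + (u n - Lm ψ n) ≤ u n := by linarith
    exact this
  calc c = liminf R atTop := hRlim.liminf_eq.symm
    _ ≤ liminf u atTop := liminf_le_liminf hle hRlim.isBoundedUnder_ge hub

lemma ces_bound (φ : ℕ → ℝ) (M : ℝ) (hM0 : 0 ≤ M) (hM : ∀ n, |φ n| ≤ M) :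
    ∀ n, |cesaro φ n| ≤ M := by
  intro n
  rcases Nat.eq_zero_or_pos n with h | h
  · simp [h, cesaro, hM0]
  · rw [cesaro, abs_mul, abs_of_nonneg (by positivity : (0:ℝ) ≤ 1/(n:ℝ))]
    have h1 : |∑ i ∈ Icc 1 n, φ i| ≤ (n:ℝ) * M := by
      calc |∑ i ∈ Icc 1 n, φ i| ≤ ∑ i ∈ Icc 1 n, |φ i| := Finset.abs_sum_le_sum_abs _ _
        _ ≤ ∑ i ∈ Icc 1 n, M := Finset.sum_le_sum fun i _ => hM i
        _ = (n:ℝ) * M := by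
            rw [Finset.sum_const, Nat.card_Icc, Nat.add_sub_cancel, nsmul_eq_mul]
    have hn : (0:ℝ) < n := by exact_mod_cast h
    calc 1/(n:ℝ) * |∑ i ∈ Icc 1 n, φ i| ≤ 1/(n:ℝ) * ((n:ℝ) * M) := by
          apply mul_le_mul_of_nonneg_left h1 (by positivity)
      _ = M := by field_simp

lemma iter_bound (φ : ℕ → ℝ) (M : ℝ) (hM0 : 0 ≤ M) (hM : ∀ n, |φ n| ≤ M) :
    ∀ k n, |cesaro^[k] φ n| ≤ M := by
  intro k
  induction k with
  | zero => exact hM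
  | succ k ih =>
    intro n
    rw [Function.iterate_succ_apply']
    exact ces_bound _ M hM0 ih n

lemma onestep (ψ : ℕ → ℝ) (M : ℝ) (hM0 : 0 ≤ M) (hM : ∀ n, |ψ n| ≤ M) :
    Tendsto (fun n => Lm ψ n - Lm (cesaro ψ) n) atTop (nhds 0) := by
  apply squeeze_zero_norm' (a := fun n : ℕ => 3*M*(1/Real.log n))
  · filter_upwards [eventually_ge_atTop 2] with n hn
    have hlog : 0 < Real.log n := Real.log_pos (by exact_mod_cast hn)
    have e : Lm ψ n - Lm (cesaro ψ) n
        = (1/Real.log n) * (∑ i ∈ Icc 1 n, ψ i / i - ∑ i ∈ Icc 1 n, cesaro ψ i / i) := by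
      rw [Lm, Lm]; ring
    rw [Real.norm_eq_abs, e, abs_mul, abs_of_nonneg (by positivity : (0:ℝ) ≤ 1/Real.log n)]
    rw [mul_comm (3*M) _]
    apply mul_le_mul_of_nonneg_left (step ψ M hM n (by omega)) (by positivity)
  · have h := (Real.tendsto_log_atTop.comp tendsto_natCast_atTop_atTop).inv_tendsto_atTop
    have h2 := h.const_mul (3*M)
    simpa [one_div] using h2

lemma err (φ : ℕ → ℝ) (M : ℝ) (hM0 : 0 ≤ M) (hM : ∀ n, |φ n| ≤ M) (k : ℕ) :
    Tendsto (fun n => Lm φ n - Lm (cesaro^[k] φ) n) atTop (nhds 0) := by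
  induction k with
  | zero => simpa using tendsto_const_nhds
  | succ k ih =>
    have h2 := onestep (cesaro^[k] φ) M hM0 (iter_bound φ M hM0 hM k)
    have h3 := ih.add h2
    simp only [Function.iterate_succ_apply']
    convert h3 using 2 with n
    · ring
    · norm_num

/-- If a bounded sequence `φ` is `C_∞` summable to `α`, then `φ` is summable to `α` by
the logarithmic method: `(1/log n) ∑_{i=1}^n φ(i)/i → α` as `n → ∞`. -/
theorem logarithmic_of_cInfty_summable (φ : ℕ → ℝ) (hbdd : ∃ M : ℝ, ∀ n, |φ n| ≤ M)
    (α : ℝ)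
    (h : Tendsto (fun k : ℕ => limsup (fun n : ℕ => cesaro^[k] φ n) atTop) atTop
          (nhds α) ∧
         Tendsto (fun k : ℕ => liminf (fun n : ℕ => cesaro^[k] φ n) atTop) atTop
          (nhds α)) :
    Tendsto (fun n : ℕ =>
        (1 / Real.log (n : ℝ)) * ∑ i ∈ Finset.Icc 1 n, φ i / (i : ℝ)) atTop
      (nhds α) := by
  obtain ⟨M, hM⟩ := hbdd
  have hM0 : 0 ≤ M := (abs_nonneg _).trans (hM 0)
  -- boundedness of Lm φ
  have hb : ∀ᶠ n in atTop, |Lm φ n| ≤ 2*M := by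
    have h2 : ∀ᶠ n : ℕ in atTop,
        (∑ i ∈ Icc 1 n, 1/(i:ℝ)) / Real.log n ≤ 2 :=
      Hlog.eventually (eventually_le_nhds (by norm_num : (1:ℝ) < 2))
    filter_upwards [h2, eventually_ge_atTop 2] with n h2n hn
    have hlog : 0 < Real.log n := Real.log_pos (by exact_mod_cast hn)
    have key : |Lm φ n| ≤ M * ((∑ i ∈ Icc 1 n, 1/(i:ℝ)) / Real.log n) := by
      rw [Lm, abs_mul, abs_of_nonneg (by positivity : (0:ℝ) ≤ 1/Real.log n)]
      have h1 : |∑ i ∈ Icc 1 n, φ i / (i:ℝ)| ≤ M * ∑ i ∈ Icc 1 n, 1/(i:ℝ) := by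
        calc |∑ i ∈ Icc 1 n, φ i / (i:ℝ)| ≤ ∑ i ∈ Icc 1 n, |φ i / (i:ℝ)| :=
              Finset.abs_sum_le_sum_abs _ _
          _ ≤ ∑ i ∈ Icc 1 n, M * (1/(i:ℝ)) := by
              apply Finset.sum_le_sum
              intro i hi
              rw [abs_div, Nat.abs_cast, div_eq_mul_one_div]
              apply mul_le_mul_of_nonneg_right (hM i) (by positivity)
          _ = M * ∑ i ∈ Icc 1 n, 1/(i:ℝ) := by rw [Finset.mul_sum]
      calc 1/Real.log n * |∑ i ∈ Icc 1 n, φ i / (i:ℝ)|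
          ≤ 1/Real.log n * (M * ∑ i ∈ Icc 1 n, 1/(i:ℝ)) := by
            apply mul_le_mul_of_nonneg_left h1 (by positivity)
        _ = M * ((∑ i ∈ Icc 1 n, 1/(i:ℝ)) / Real.log n) := by
            field_simp
    calc |Lm φ n| ≤ M * ((∑ i ∈ Icc 1 n, 1/(i:ℝ)) / Real.log n) := key
      _ ≤ M * 2 := mul_le_mul_of_nonneg_left h2n hM0
      _ = 2*M := by ring
  have hbLe : IsBoundedUnder (· ≤ ·) atTop (Lm φ) :=
    isBoundedUnder_of_eventually_le (hb.mono fun n hn => (abs_le.mp hn).2)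
  have hbGe : IsBoundedUnder (· ≥ ·) atTop (Lm φ) :=
    isBoundedUnder_of_eventually_ge (hb.mono fun n hn => (abs_le.mp hn).1)
  have hcoLe : IsCoboundedUnder (· ≤ ·) atTop (Lm φ) := hbGe.isCoboundedUnder_le
  have hcoGe : IsCoboundedUnder (· ≥ ·) atTop (Lm φ) := hbLe.isCoboundedUnder_ge
  -- iterate bounds
  have hψb : ∀ k, ∀ n, |cesaro^[k] φ n| ≤ M := iter_bound φ M hM0 hM
  have hψLe : ∀ k, IsBoundedUnder (· ≤ ·) atTop (fun n : ℕ => cesaro^[k] φ n) :=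
    fun k => isBoundedUnder_of_eventually_le
      (Eventually.of_forall fun n => (abs_le.mp (hψb k n)).2)
  have hψGe : ∀ k, IsBoundedUnder (· ≥ ·) atTop (fun n : ℕ => cesaro^[k] φ n) :=
    fun k => isBoundedUnder_of_eventually_ge
      (Eventually.of_forall fun n => (abs_le.mp (hψb k n)).1)
  -- limsup bound
  have hsup : limsup (Lm φ) atTop ≤ α := by
    apply ge_of_tendsto' h.1
    intro k
    apply le_of_forall_gt_imp_ge_of_dense
    intro c hc
    have hev : ∀ᶠ n in atTop, cesaro^[k] φ n ≤ c :=
      (eventually_lt_of_limsup_lt hc (hψLe k)).mono fun n hn => hn.le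
    exact reg_above _ c hev (Lm φ) (err φ M hM0 hM k) hcoLe
  have hinf : α ≤ liminf (Lm φ) atTop := by
    apply le_of_tendsto' h.2
    intro k
    apply le_of_forall_lt_imp_le_of_dense
    intro c hc
    have hev : ∀ᶠ n in atTop, c ≤ cesaro^[k] φ n :=
      (eventually_lt_of_lt_liminf hc (hψGe k)).mono fun n hn => hn.le
    exact reg_below _ c hev (Lm φ) (err φ M hM0 hM k) hcoGe
  have hls : liminf (Lm φ) atTop ≤ limsup (Lm φ) atTop := liminf_le_limsup hbLe hbGe
  have h1 : limsup (Lm φ) atTop = α := le_antisymm hsup (hinf.trans hls)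
  have h2 : liminf (Lm φ) atTop = α := le_antisymm (hls.trans hsup) hinf
  exact tendsto_of_liminf_eq_limsup h2 h1 hbLe hbGe
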